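/- arXiv:1006.2956 — 2 statements merged into one kernel-verified Lean document; each statement's English description precedes it below -/
import Mathlib

section
/- Let L be a matrix indexed by a finite set X such that det(I+L) ≠ 0, and define a probability measure on subsets of X by P({S}) = det(L_S)/det(I+L). Then with K = L(I+L)^{-1}, for every subset S ⊆ X, the probability that the random subset contains S equals det(K_S). -/
open Finset Matrix

/-- The principal submatrix of `M` with rows and columns indexed by `S`. -/
def principalMinor {X : Type*} (M : Matrix X X ℝ) (S : Finset X) :
    Matrix {x // x ∈ S} {x // x ∈ S} ℝ :=
  M.submatrix (fun i => (i : X)) (fun j => (j : X))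

lemma det_piecewise_one {X : Type*} [Fintype X] [DecidableEq X]
    (M : Matrix X X ℝ) (s : Finset X) :
    Matrix.det (Matrix.of (s.piecewise (fun i => M i) (fun i => (1 : Matrix X X ℝ) i)))
      = (principalMinor M s).det := by
  set N : Matrix X X ℝ :=
    Matrix.of (s.piecewise (fun i => M i) (fun i => (1 : Matrix X X ℝ) i)) with hN
  have e : {x // x ∈ s} ⊕ {x // ¬ x ∈ s} ≃ X := Equiv.sumCompl (· ∈ s)
  rw [← Matrix.det_submatrix_equiv_self (Equiv.sumCompl (· ∈ s)) N]
  have hblock : N.submatrix (Equiv.sumCompl (· ∈ s)) (Equiv.sumCompl (· ∈ s)) =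
      Matrix.fromBlocks (principalMinor M s)
        (M.submatrix (fun i : {x // x ∈ s} => (i : X)) (fun j : {x // ¬ x ∈ s} => (j : X)))
        0 1 := by
    ext i j
    cases i with
    | inl i =>
      cases j with
      | inl j =>
        simp [N, principalMinor, Finset.piecewise, i.2]
      | inr j =>
        simp [N, Finset.piecewise, i.2]
    | inr i =>
      cases j with
      | inl j =>
        have : (i : X) ≠ (j : X) := by
          intro h
          exact i.2 (h ▸ j.2)
        simp [N, Finset.piecewise, i.2, Matrix.one_apply, this]
      | inr j =>
        simp [N, Finset.piecewise, i.2, Matrix.one_apply, Subtype.ext_iff]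
  rw [hblock, Matrix.det_fromBlocks_zero₂₁, Matrix.det_one, mul_one]

lemma det_add_diagonal {X : Type*} [Fintype X] [DecidableEq X]
    (M : Matrix X X ℝ) (d : X → ℝ) :
    (M + Matrix.diagonal d).det
      = ∑ s : Finset X, (∏ i ∈ sᶜ, d i) * (principalMinor M s).det := by
  set f : MultilinearMap ℝ (fun _ : X => X → ℝ) ℝ :=
    (Matrix.detRowAlternating : (X → ℝ) [⋀^X]→ₗ[ℝ] ℝ).toMultilinearMap with hf
  have h1 : (M + Matrix.diagonal d).det = f (fun i => M i + Matrix.diagonal d i) := rfl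
  rw [h1]
  have h2 := f.map_add_univ (fun i => M i) (fun i => Matrix.diagonal d i)
  rw [show (fun i => M i + Matrix.diagonal d i) =
      ((fun i => M i) + fun i => Matrix.diagonal d i) from rfl, h2]
  refine Finset.sum_congr rfl fun s _ => ?_
  set N : X → X → ℝ := s.piecewise (fun i => M i) (fun i => (1 : Matrix X X ℝ) i) with hNdef
  have hpw : s.piecewise (fun i => M i) (fun i => Matrix.diagonal d i)
      = sᶜ.piecewise (fun i => d i • N i) N := by
    funext i
    by_cases h : i ∈ s
    · rw [s.piecewise_eq_of_mem _ _ h,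
        sᶜ.piecewise_eq_of_notMem _ _ (by simpa using h), hNdef,
        s.piecewise_eq_of_mem _ _ h]
    · rw [s.piecewise_eq_of_notMem _ _ h,
        sᶜ.piecewise_eq_of_mem _ _ (Finset.mem_compl.mpr h)]
      have hN1 : N i = (1 : Matrix X X ℝ) i := s.piecewise_eq_of_notMem _ _ h
      rw [hN1]
      funext j
      simp only [Pi.smul_apply, smul_eq_mul, Matrix.diagonal_apply, Matrix.one_apply,
        mul_ite, mul_one, mul_zero]
  rw [hpw, f.map_piecewise_smul]
  have h3 : f N = (principalMinor M s).det := det_piecewise_one M s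
  rw [h3, smul_eq_mul]

/-- For an L-ensemble with kernel `K = L (1+L)⁻¹`,
the probability that the random subset contains `S` equals `det K_S`. -/
theorem lEnsemble_containment_probability
    {X : Type*} [Fintype X] [DecidableEq X] (L : Matrix X X ℝ)
    (hpos : ∀ S : Finset X, 0 ≤ (principalMinor L S).det)
    (hdet : 0 < (1 + L).det) :
    ∀ S : Finset X,
      (∑ Y ∈ Finset.univ.filter (fun Y : Finset X => S ⊆ Y),
          (principalMinor L Y).det / (1 + L).det)
        = (principalMinor (L * (1 + L)⁻¹) S).det := by
  intro S
  have hne : (1 + L).det ≠ 0 := ne_of_gt hdet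
  have hinv : (1 + L) * (1 + L)⁻¹ = 1 := Matrix.mul_nonsing_inv _ (isUnit_iff_ne_zero.mpr hne)
  set B : Matrix X X ℝ := (1 + L)⁻¹ with hB
  -- K = 1 - B
  have hK : L * (1 + L)⁻¹ = 1 - B := by
    calc L * (1 + L)⁻¹ = ((1 + L) - 1) * (1 + L)⁻¹ := by rw [add_sub_cancel_left]
      _ = (1 + L) * (1 + L)⁻¹ - 1 * (1 + L)⁻¹ := sub_mul _ _ _
      _ = 1 - B := by rw [hinv, one_mul]
  set d : X → ℝ := fun i => if i ∈ S then 0 else 1 with hd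
  -- Step 1: the sum equals det (L + diagonal d) / det (1+L)
  have hsum : (∑ Y ∈ Finset.univ.filter (fun Y : Finset X => S ⊆ Y),
      (principalMinor L Y).det) = (L + Matrix.diagonal d).det := by
    rw [det_add_diagonal]
    rw [Finset.sum_filter]
    refine Finset.sum_congr rfl fun Y _ => ?_
    have hprod : (∏ i ∈ Yᶜ, d i) = if S ⊆ Y then 1 else 0 := by
      by_cases h : S ⊆ Y
      · rw [if_pos h]
        apply Finset.prod_eq_one
        intro i hi
        have : i ∉ S := fun hiS => (Finset.mem_compl.mp hi) (h hiS)
        simp [d, this]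
      · rw [if_neg h]
        obtain ⟨i, hiS, hiY⟩ := Finset.not_subset.mp h
        exact Finset.prod_eq_zero (Finset.mem_compl.mpr hiY) (by simp [d, hiS])
    rw [hprod]
    split_ifs <;> simp
  -- Step 2: det (L + diagonal d) = det (1+L) * det (principalMinor (1-B) S)
  set E : Matrix X {x // x ∈ S} ℝ := Matrix.of fun i j => if i = (j : X) then (1:ℝ) else 0 with hE
  have hEE : E * Eᵀ = Matrix.diagonal (fun i => if i ∈ S then (1:ℝ) else 0) := by
    ext i j
    simp only [Matrix.mul_apply, Matrix.transpose_apply, E, Matrix.of_apply,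
      Matrix.diagonal_apply, ite_mul, one_mul, zero_mul]
    by_cases h : i = j
    · subst h
      by_cases hiS : i ∈ S
      · rw [Finset.sum_eq_single (⟨i, hiS⟩ : {x // x ∈ S})]
        · simp [hiS]
        · intro b _ hb
          simp only [ite_eq_right_iff]
          intro h1 h2
          exact absurd (Subtype.ext h1.symm) hb
        · simp
      · simp only [if_pos rfl, eq_self_iff_true]
        rw [Finset.sum_eq_zero]
        · simp [hiS]
        · intro b _
          have : i ≠ (b : X) := fun h => hiS (h ▸ b.2)
          simp [this]
    · simp only [if_neg h]
      rw [Finset.sum_eq_zero]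
      intro b _
      by_cases h1 : i = (b : X)
      · have : j ≠ (b : X) := fun h2 => h (h1.trans h2.symm)
        simp [h1, this]
      · simp [h1]
  have hEBE : Eᵀ * B * E = principalMinor B S := by
    ext i j
    simp only [Matrix.mul_apply, Matrix.transpose_apply, E, Matrix.of_apply, principalMinor,
      Matrix.submatrix_apply, ite_mul, one_mul, zero_mul, mul_ite, mul_one, mul_zero]
    rw [Finset.sum_congr rfl (fun l _ => ?_)]
    · rw [Finset.sum_ite_eq' Finset.univ (j : X) (fun l => B (i : X) l)]
      simp
    · rw [Finset.sum_ite_eq' Finset.univ (i : X) (fun k => B k l)]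
      simp
  have hstep2 : (L + Matrix.diagonal d).det
      = (1 + L).det * (principalMinor (L * (1 + L)⁻¹) S).det := by
    have hfactor : (1 + L) * (1 - B * (E * Eᵀ)) = L + Matrix.diagonal d := by
      rw [mul_sub, mul_one, ← mul_assoc, hinv, one_mul, hEE]
      have hdd : Matrix.diagonal d
          = 1 - Matrix.diagonal (fun i => if i ∈ S then (1:ℝ) else 0) := by
        rw [hd]
        ext i j
        simp only [Matrix.diagonal_apply, Matrix.sub_apply, Matrix.one_apply]
        split_ifs <;> ring
      rw [hdd]
      abel
    rw [← hfactor, Matrix.det_mul]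
    congr 1
    have : 1 - B * (E * Eᵀ) = 1 - (B * E) * Eᵀ := by rw [Matrix.mul_assoc]
    rw [this, Matrix.det_one_sub_mul_comm]
    have : 1 - Eᵀ * (B * E) = principalMinor (L * (1 + L)⁻¹) S := by
      rw [← Matrix.mul_assoc, hEBE, hK]
      ext i j
      simp only [principalMinor, Matrix.sub_apply, Matrix.submatrix_apply, Matrix.one_apply, Subtype.ext_iff]
    rw [this]
  rw [← Finset.sum_div, hsum, hstep2, ← hB, mul_comm, mul_div_assoc, div_self hne, mul_one]
end

section
/- For n ≥ 1, t > 0 and real x: (1/(iπ)) ∫_Γ v^{−n} exp(v² − 2vx/√t) dv = (2^n/(√π t^{n/2})) ∫_ℝ H^n(y−x) e^{−y²/t} dy, where Γ goes from −i∞ to i∞ to the right of the origin. -/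
open MeasureTheory Real Complex

/-- `Hpow n x = x^{n−1}/(n−1)! · 1{x ≥ 0}` for `n ≥ 1`. -/
noncomputable def Hpow (n : ℕ) (x : ℝ) : ℝ :=
  if 0 ≤ x then x ^ (n - 1) / (n - 1).factorial else 0

section AuxLemmas

open Set Filter

lemma aux_pow_exp_int (k : ℕ) {b : ℝ} (hb : 0 < b) :
    IntegrableOn (fun w : ℝ => w ^ k * Real.exp (-(b * w))) (Set.Ioi 0) := by
  have hb2 : 0 < b / 2 := by linarith
  refine Integrable.mono' ((exp_neg_integrableOn_Ioi 0 hb2).const_mul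
      ((k.factorial : ℝ) * (2 / b) ^ k)) ?_ ?_
  · exact (Continuous.aestronglyMeasurable (by continuity)).restrict
  · filter_upwards [ae_restrict_mem measurableSet_Ioi] with w hw
    have hw0 : (0:ℝ) < w := hw
    have key : ((b/2) * w) ^ k / k.factorial ≤ Real.exp ((b/2) * w) := by
      refine le_trans ?_ (Real.sum_le_exp_of_nonneg (by positivity) (k+1))
      exact Finset.single_le_sum (f := fun i => ((b/2)*w)^i / i.factorial)
        (fun i _ => by positivity) (Finset.self_mem_range_succ k)
    have hwk : w ^ k ≤ (k.factorial : ℝ) * (2/b)^k * Real.exp ((b/2)*w) := by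
      have h1 : ((b/2) * w) ^ k ≤ (k.factorial : ℝ) * Real.exp ((b/2)*w) := by
        rw [div_le_iff₀ (by positivity)] at key
        linarith [key]
      have h2 : w ^ k = ((b/2) * w) ^ k * (2/b)^k := by
        rw [← mul_pow]
        congr 1
        field_simp
      rw [h2]
      calc ((b/2) * w) ^ k * (2/b)^k ≤ ((k.factorial : ℝ) * Real.exp ((b/2)*w)) * (2/b)^k := by
            apply mul_le_mul_of_nonneg_right h1 (by positivity)
        _ = (k.factorial : ℝ) * (2/b)^k * Real.exp ((b/2)*w) := by ring
    have : ‖w ^ k * Real.exp (-(b * w))‖ = w ^ k * Real.exp (-(b*w)) := by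
      rw [Real.norm_eq_abs, _root_.abs_of_nonneg (by positivity)]
    rw [this]
    calc w ^ k * Real.exp (-(b*w))
        ≤ ((k.factorial : ℝ) * (2/b)^k * Real.exp ((b/2)*w)) * Real.exp (-(b*w)) := by
          apply mul_le_mul_of_nonneg_right hwk (le_of_lt (Real.exp_pos _))
      _ = (k.factorial : ℝ) * (2/b)^k * Real.exp (-(b/2) * w) := by
          rw [mul_assoc, ← Real.exp_add]; congr 2; ring

lemma norm_cexp_pow (k : ℕ) (v : ℂ) (w : ℝ) :
    ‖(w:ℂ) ^ k * Complex.exp (-(2*v*w))‖ = |w| ^ k * Real.exp (-(2*v.re*w)) := by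
  rw [norm_mul, norm_pow, Complex.norm_real, Real.norm_eq_abs,
    Complex.norm_exp]
  congr 2
  simp only [Complex.neg_re, Complex.mul_re, Complex.ofReal_re, Complex.ofReal_im,
    Complex.mul_im, Complex.re_ofNat, Complex.im_ofNat]
  ring

lemma aux_cpow_exp_int (k : ℕ) {v : ℂ} (hv : 0 < v.re) :
    IntegrableOn (fun w : ℝ => (w:ℂ) ^ k * Complex.exp (-(2*v*w))) (Set.Ioi 0) := by
  refine Integrable.mono' (aux_pow_exp_int k (b := 2*v.re) (by linarith)) ?_ ?_
  · exact (Continuous.aestronglyMeasurable (by continuity)).restrict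
  · filter_upwards [ae_restrict_mem measurableSet_Ioi] with w hw
    have hw0 : (0:ℝ) < w := hw
    rw [norm_cexp_pow, _root_.abs_of_nonneg hw0.le]

lemma exp_hasDeriv {v : ℂ} (w : ℝ) :
    HasDerivAt (fun w : ℝ => Complex.exp (-(2*v*w))) (-(2*v) * Complex.exp (-(2*v*w))) w := by
  have h1 : HasDerivAt (fun w : ℝ => -(2*v*(w:ℂ))) (-(2*v)) w := by
    have := (((hasDerivAt_id ((w:ℝ) : ℂ)).const_mul (2*v)).neg).comp_ofReal
    simpa using this
  simpa [mul_comm] using h1.cexp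

lemma tendsto_cexp_aux {v : ℂ} (hv : 0 < v.re) (k : ℕ) :
    Tendsto (fun w : ℝ => (w:ℂ)^k * Complex.exp (-(2*v*w))) atTop (nhds 0) := by
  rw [tendsto_zero_iff_norm_tendsto_zero]
  have hnorm : ∀ᶠ w : ℝ in atTop, (1/(2*v.re)^k) * ((2*v.re*w)^k * Real.exp (-(2*v.re*w)))
      = ‖(w:ℂ)^k * Complex.exp (-(2*v*w))‖ := by
    filter_upwards [eventually_ge_atTop (0:ℝ)] with w hw
    rw [norm_cexp_pow, _root_.abs_of_nonneg hw]
    have h2 : (0:ℝ) < 2*v.re := by linarith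
    field_simp [mul_pow]
    ring
  refine Tendsto.congr' hnorm ?_
  have h2 : Tendsto (fun w : ℝ => 2*v.re*w) atTop atTop :=
    Tendsto.const_mul_atTop (by linarith) tendsto_id
  have h3 := (Real.tendsto_pow_mul_exp_neg_atTop_nhds_zero k).comp h2
  have h4 := h3.const_mul (1/(2*v.re)^k)
  simpa [Function.comp] using h4

lemma aux_laplace (m : ℕ) {v : ℂ} (hv : 0 < v.re) :
    ∫ w in Set.Ioi (0:ℝ), (w:ℂ) ^ m * Complex.exp (-(2*v*w))
      = (m.factorial : ℂ) / (2*v)^(m+1) := by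
  have hv0 : v ≠ 0 := fun h => by simp [h] at hv
  have h2v : (2*v) ≠ 0 := mul_ne_zero two_ne_zero hv0
  induction m with
  | zero =>
    have htend : Tendsto (fun w : ℝ => -Complex.exp (-(2*v*w)) / (2*v)) atTop (nhds 0) := by
      have h4 := ((tendsto_cexp_aux hv 0).div_const (2*v)).neg
      simp only [zero_div, neg_zero] at h4
      refine h4.congr fun w => by simp; ring
    have key := integral_Ioi_of_hasDerivAt_of_tendsto (a := (0:ℝ))
      (f := fun w : ℝ => -Complex.exp (-(2*v*w)) / (2*v))
      (f' := fun w : ℝ => Complex.exp (-(2*v*w)))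
      (Continuous.continuousWithinAt (by continuity))
      (fun w _ => by
        have h5 := ((exp_hasDeriv (v := v) w).neg).div_const (2*v)
        have heq : -(-(2*v) * Complex.exp (-(2*v*w)))/(2*v) = Complex.exp (-(2*v*w)) := by
          field_simp
        rwa [heq] at h5)
      (by simpa using aux_cpow_exp_int 0 hv)
      htend
    simp only [Complex.ofReal_zero, mul_zero, neg_zero, Complex.exp_zero] at key
    simp only [pow_zero, one_mul, pow_one]
    rw [key, Nat.factorial_zero]
    push_cast
    field_simp
    ring
  | succ m ih =>
    have h1 := aux_cpow_exp_int (m+1) hv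
    have h2 := (aux_cpow_exp_int m hv).const_mul (((m+1:ℕ):ℂ)/(2*v))
    have htend : Tendsto (fun w : ℝ => -((w:ℂ)^(m+1) * Complex.exp (-(2*v*w))) / (2*v))
        atTop (nhds 0) := by
      have h4 := ((tendsto_cexp_aux hv (m+1)).div_const (2*v)).neg
      simp only [zero_div, neg_zero] at h4
      refine h4.congr fun w => by ring
    have key := integral_Ioi_of_hasDerivAt_of_tendsto (a := (0:ℝ))
      (f := fun w : ℝ => -((w:ℂ)^(m+1) * Complex.exp (-(2*v*w))) / (2*v))
      (f' := fun w : ℝ => (w:ℂ)^(m+1) * Complex.exp (-(2*v*w))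
        - ((m+1:ℕ):ℂ)/(2*v) * ((w:ℂ)^m * Complex.exp (-(2*v*w))))
      (Continuous.continuousWithinAt (by continuity))
      (fun w _ => by
        have hp : HasDerivAt (fun w : ℝ => ((w:ℂ))^(m+1)) (((m+1:ℕ):ℂ) * (w:ℂ)^m) w := by
          have := (hasDerivAt_pow (m+1) ((w:ℝ):ℂ)).comp_ofReal
          simpa using this
        have h5 := ((hp.mul (exp_hasDeriv (v := v) w)).neg).div_const (2*v)
        have heq : -(((m+1:ℕ):ℂ) * (w:ℂ)^m * Complex.exp (-(2*v*w))
              + (w:ℂ)^(m+1) * (-(2*v) * Complex.exp (-(2*v*w))))/(2*v)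
            = (w:ℂ)^(m+1) * Complex.exp (-(2*v*w))
              - ((m+1:ℕ):ℂ)/(2*v) * ((w:ℂ)^m * Complex.exp (-(2*v*w))) := by
          field_simp
          ring
        rwa [heq] at h5)
      (h1.sub h2)
      htend
    rw [integral_sub h1 h2, integral_const_mul, ih] at key
    simp only [Complex.ofReal_zero, zero_pow (Nat.succ_ne_zero m), neg_zero, zero_mul,
      mul_zero, zero_div, sub_zero, neg_mul, zero_sub, neg_neg] at key
    have key2 : ∫ w in Set.Ioi (0:ℝ), (w:ℂ)^(m+1) * Complex.exp (-(2*v*w))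
        = ((m+1:ℕ):ℂ)/(2*v) * ((m.factorial : ℂ) / (2*v)^(m+1)) := sub_eq_zero.mp key
    rw [key2, Nat.factorial_succ, div_mul_div_comm, ← pow_succ']
    push_cast
    ring

lemma aux_gauss (c b : ℝ) :
    ∫ s : ℝ, Complex.exp (((c:ℂ) + s*I)^2 - 2*((c:ℂ)+s*I)*(b:ℂ))
      = (Real.sqrt Real.pi : ℂ) * Complex.exp (-(b:ℂ)^2) := by
  have h := integral_cexp_quadratic (b := (-1:ℂ)) (by norm_num) (2*I*((c:ℂ)-b)) ((c:ℂ)^2 - 2*c*b)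
  have h1 : (fun s : ℝ => Complex.exp (((c:ℂ) + s*I)^2 - 2*((c:ℂ)+s*I)*(b:ℂ)))
      = fun s : ℝ => Complex.exp ((-1:ℂ)*s^2 + (2*I*((c:ℂ)-b))*s + ((c:ℂ)^2 - 2*c*b)) := by
    funext s
    congr 1
    linear_combination (s:ℂ)^2 * Complex.I_sq
  rw [h1, h]
  have h2 : ((Real.pi : ℂ) / -(-1)) ^ (1/2 : ℂ) = (Real.sqrt Real.pi : ℂ) := by
    rw [neg_neg, div_one, Real.sqrt_eq_rpow, Complex.ofReal_cpow Real.pi_pos.le]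
    norm_num
  have h3 : ((c:ℂ)^2 - 2*c*b) - (2*I*((c:ℂ)-b))^2/(4*(-1)) = -(b:ℂ)^2 := by
    linear_combination ((c:ℂ)-(b:ℂ))^2 * Complex.I_sq
  rw [h2, h3]

lemma aux_pointwise (m : ℕ) {v : ℂ} (hv : 0 < v.re) (a : ℝ) :
    v ^ (-((m+1:ℕ) : ℤ)) * Complex.exp (v^2 - 2*v*(a:ℂ)) =
      ((2:ℂ)^(m+1) / (m.factorial : ℂ)) *
        ∫ w in Set.Ioi (0:ℝ), (w:ℂ)^m * Complex.exp (v^2 - 2*v*((a:ℂ)+w)) := by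
  have hv0 : v ≠ 0 := fun h => by simp [h] at hv
  have hsplit : (fun w : ℝ => (w:ℂ)^m * Complex.exp (v^2 - 2*v*((a:ℂ)+w)))
      = fun w : ℝ => ((w:ℂ)^m * Complex.exp (-(2*v*w))) * Complex.exp (v^2 - 2*v*(a:ℂ)) := by
    funext w
    rw [mul_assoc ((w:ℂ)^m), ← Complex.exp_add]
    congr 2
    ring
  rw [hsplit, integral_mul_const, aux_laplace m hv]
  rw [zpow_neg, zpow_natCast]
  have hfac : (m.factorial : ℂ) ≠ 0 := Nat.cast_ne_zero.mpr m.factorial_ne_zero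
  field_simp [mul_pow]
  ring

lemma Hpow_scale (m : ℕ) {r : ℝ} (hr : 0 < r) (w : ℝ) :
    Hpow (m+1) (r * w) = r ^ m * Hpow (m+1) w := by
  unfold Hpow
  simp only [Nat.add_sub_cancel]
  rcases le_or_gt 0 w with h | h
  · rw [if_pos (mul_nonneg hr.le h), if_pos h, mul_pow]
    ring
  · rw [if_neg (by nlinarith), if_neg (not_le.mpr h), mul_zero]

lemma Hpow_integral (m : ℕ) (E : ℝ → ℝ) :
    ∫ w : ℝ, Hpow (m+1) w * E w = ∫ w in Set.Ioi (0:ℝ), w^m/(m.factorial:ℝ) * E w := by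
  rw [← integral_Ici_eq_integral_Ioi, ← integral_indicator measurableSet_Ici]
  congr 1
  funext w
  unfold Hpow
  simp only [Nat.add_sub_cancel]
  by_cases h : 0 ≤ w
  · rw [Set.indicator_of_mem (show w ∈ Set.Ici (0:ℝ) from h), if_pos h]
  · rw [Set.indicator_of_notMem (by simpa using h), if_neg h, zero_mul]

lemma real_side (m : ℕ) (t x a : ℝ) (ht : 0 < t) (ha : a = x / Real.sqrt t) :
    ∫ y : ℝ, Hpow (m+1) (y - x) * Real.exp (-y^2/t)
      = Real.sqrt t ^ (m+1) *
        ∫ w in Set.Ioi (0:ℝ), w^m/(m.factorial:ℝ) * Real.exp (-(a+w)^2) := by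
  have hst : (0:ℝ) < Real.sqrt t := Real.sqrt_pos.mpr ht
  have hxa : Real.sqrt t * a = x := by rw [ha]; field_simp
  have h1 : ∫ y : ℝ, Hpow (m+1) (y - x) * Real.exp (-y^2/t)
      = ∫ z : ℝ, Hpow (m+1) z * Real.exp (-(z+x)^2/t) := by
    rw [← integral_add_right_eq_self (fun y => Hpow (m+1) (y - x) * Real.exp (-y^2/t)) x]
    simp only [add_sub_cancel_right]
  rw [h1]
  have h2' := MeasureTheory.Measure.integral_comp_mul_left
    (fun z => Hpow (m+1) z * Real.exp (-(z+x)^2/t)) (Real.sqrt t)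
  rw [abs_inv, _root_.abs_of_pos hst, smul_eq_mul] at h2'
  have h2 : ∫ z : ℝ, Hpow (m+1) z * Real.exp (-(z+x)^2/t)
      = Real.sqrt t * ∫ w : ℝ, Hpow (m+1) (Real.sqrt t * w)
          * Real.exp (-(Real.sqrt t * w + x)^2/t) := by
    rw [h2', ← mul_assoc, mul_inv_cancel₀ hst.ne', one_mul]
  rw [h2]
  have h3 : (fun w : ℝ => Hpow (m+1) (Real.sqrt t * w) * Real.exp (-(Real.sqrt t * w + x)^2/t))
      = fun w : ℝ => Real.sqrt t ^ m * (Hpow (m+1) w * Real.exp (-(a+w)^2)) := by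
    funext w
    rw [Hpow_scale m hst]
    have hxw : Real.sqrt t * w + x = Real.sqrt t * (a + w) := by rw [← hxa]; ring
    have hexp : -(Real.sqrt t * w + x)^2/t = -(a+w)^2 := by
      rw [hxw, mul_pow, Real.sq_sqrt ht.le]
      field_simp
    rw [hexp]
    ring
  rw [h3, integral_const_mul, Hpow_integral m (fun w => Real.exp (-(a+w)^2)), ← mul_assoc,
    ← pow_succ']

end AuxLemmas

set_option maxHeartbeats 1000000 in
/-- for `n ≥ 1`, `t > 0` and real `x`,
`(1/(iπ)) ∫_Γ v^{−n} e^{v² − 2vx/√t} dv = (2^n/(√π t^{n/2})) ∫_ℝ H^n(y−x) e^{−y²/t} dy`,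
where `Γ` is the upward-oriented vertical line `Re v = c > 0`
(so `∫_Γ f(v) dv = i ∫_ℝ f(c + is) ds`). -/
theorem contour_Hpow_representation (n : ℕ) (hn : 1 ≤ n) (t x : ℝ) (ht : 0 < t)
    (c : ℝ) (hc : 0 < c) :
    (1 / (Complex.I * (Real.pi : ℂ))) *
        (Complex.I * ∫ s : ℝ, ((c : ℂ) + (s : ℂ) * Complex.I) ^ (-(n : ℤ)) *
            Complex.exp (((c : ℂ) + (s : ℂ) * Complex.I) ^ 2 -
              2 * ((c : ℂ) + (s : ℂ) * Complex.I) * (x : ℂ) / (Real.sqrt t : ℂ))) =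
      (((2 : ℝ) ^ n / (Real.sqrt Real.pi * t ^ ((n : ℝ) / 2)) *
          ∫ y : ℝ, Hpow n (y - x) * Real.exp (-y ^ 2 / t) : ℝ) : ℂ) := by
  obtain ⟨m, rfl⟩ : ∃ m, n = m + 1 := ⟨n - 1, (Nat.succ_pred_eq_of_pos hn).symm⟩
  have hst : (0:ℝ) < Real.sqrt t := Real.sqrt_pos.mpr ht
  set a : ℝ := x / Real.sqrt t with ha
  have hfacR : ((m.factorial : ℝ)) ≠ 0 := Nat.cast_ne_zero.mpr m.factorial_ne_zero
  have hπ : Real.sqrt Real.pi ≠ 0 := ne_of_gt (Real.sqrt_pos.mpr Real.pi_pos)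
  have hvre : ∀ s : ℝ, (0:ℝ) < ((c:ℂ) + (s:ℂ)*Complex.I).re := fun s => by
    simpa using hc
  -- Step 1: replace `v^{-n}` by its Laplace-transform representation
  have hpoint : (fun s : ℝ => ((c : ℂ) + (s : ℂ) * Complex.I) ^ (-((m+1 : ℕ) : ℤ)) *
        Complex.exp (((c : ℂ) + (s : ℂ) * Complex.I) ^ 2 -
          2 * ((c : ℂ) + (s : ℂ) * Complex.I) * (x : ℂ) / (Real.sqrt t : ℂ)))
      = fun s : ℝ => ((2:ℂ)^(m+1) / (m.factorial : ℂ)) *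
          ∫ w in Set.Ioi (0:ℝ), (w:ℂ)^m *
            Complex.exp (((c:ℂ)+(s:ℂ)*Complex.I)^2
              - 2*((c:ℂ)+(s:ℂ)*Complex.I)*((a:ℂ)+w)) := by
    funext s
    have hx2 : 2*((c:ℂ)+(s:ℂ)*Complex.I)*(x:ℂ)/(Real.sqrt t:ℂ)
        = 2*((c:ℂ)+(s:ℂ)*Complex.I)*(a:ℂ) := by
      rw [ha]
      push_cast
      rw [mul_div_assoc]
    rw [hx2]
    exact aux_pointwise m (hvre s) a
  rw [hpoint, MeasureTheory.integral_const_mul]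
  -- Step 2: Fubini
  have hcont : Continuous (Function.uncurry fun (s w : ℝ) => (w:ℂ)^m *
      Complex.exp (((c:ℂ)+(s:ℂ)*Complex.I)^2 - 2*((c:ℂ)+(s:ℂ)*Complex.I)*((a:ℂ)+w))) := by
    apply Continuous.mul
    · exact (Complex.continuous_ofReal.comp continuous_snd).pow m
    · apply Complex.continuous_exp.comp
      fun_prop
  have hae : ∀ᵐ p : ℝ×ℝ ∂((volume : Measure ℝ).prod (volume.restrict (Set.Ioi (0:ℝ)))),
      0 < p.2 := by
    rw [ae_iff]
    have hset : {p : ℝ×ℝ | ¬ 0 < p.2} = Set.univ ×ˢ Set.Iic (0:ℝ) := by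
      ext p; simp [not_lt]
    rw [hset, MeasureTheory.Measure.prod_prod,
      MeasureTheory.Measure.restrict_apply measurableSet_Iic, Set.Iic_inter_Ioi]
    simp
  have hnormF : ∀ (s w : ℝ), 0 < w →
      ‖(w:ℂ)^m * Complex.exp (((c:ℂ)+(s:ℂ)*Complex.I)^2
          - 2*((c:ℂ)+(s:ℂ)*Complex.I)*((a:ℂ)+w))‖
      = (Real.exp (c^2 - 2*c*a) * Real.exp (-s^2)) * (w^m * Real.exp (-(2*c*w))) := by
    intro s w hw
    rw [norm_mul, norm_pow, Complex.norm_real, Real.norm_eq_abs,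
      Complex.norm_exp, _root_.abs_of_nonneg hw.le]
    have hre : ((((c:ℂ)+(s:ℂ)*Complex.I)^2
        - 2*((c:ℂ)+(s:ℂ)*Complex.I)*((a:ℂ)+w))).re
        = (c^2 - 2*c*a) + -s^2 + -(2*c*w) := by
      simp only [Complex.sub_re, Complex.mul_re, Complex.add_re, Complex.add_im, pow_two,
        Complex.mul_im, Complex.ofReal_re, Complex.ofReal_im, Complex.I_re, Complex.I_im,
        Complex.re_ofNat, Complex.im_ofNat]
      ring
    rw [hre, Real.exp_add, Real.exp_add]
    ring
  have hg1 : Integrable (fun s : ℝ => Real.exp (c^2-2*c*a) * Real.exp (-s^2)) := by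
    have h0 := integrable_exp_neg_mul_sq (b := (1:ℝ)) one_pos
    simp only [neg_mul, one_mul] at h0
    exact h0.const_mul _
  have hg2 : IntegrableOn (fun w : ℝ => w^m * Real.exp (-(2*c*w))) (Set.Ioi 0) :=
    aux_pow_exp_int m (by linarith)
  have hint : Integrable (Function.uncurry fun (s w : ℝ) => (w:ℂ)^m *
      Complex.exp (((c:ℂ)+(s:ℂ)*Complex.I)^2 - 2*((c:ℂ)+(s:ℂ)*Complex.I)*((a:ℂ)+w)))
      ((volume : Measure ℝ).prod (volume.restrict (Set.Ioi (0:ℝ)))) := by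
    refine Integrable.mono' (hg1.mul_prod hg2) hcont.aestronglyMeasurable ?_
    filter_upwards [hae] with p hp
    exact le_of_eq (hnormF p.1 p.2 hp)
  rw [MeasureTheory.integral_integral_swap hint]
  -- Step 3: evaluate the inner Gaussian contour integral
  have hinner : (fun w : ℝ => ∫ s : ℝ, (w:ℂ)^m *
        Complex.exp (((c:ℂ)+(s:ℂ)*Complex.I)^2 - 2*((c:ℂ)+(s:ℂ)*Complex.I)*((a:ℂ)+w)))
      = fun w : ℝ => (((w^m * (Real.sqrt Real.pi * Real.exp (-(a+w)^2)) : ℝ)) : ℂ) := by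
    funext w
    rw [MeasureTheory.integral_const_mul]
    have hg := aux_gauss c (a+w)
    simp only [Complex.ofReal_add] at hg
    rw [hg]
    push_cast
    ring
  rw [hinner]
  have hofr : ∫ w in Set.Ioi (0:ℝ), (((w^m * (Real.sqrt Real.pi * Real.exp (-(a+w)^2)) : ℝ)) : ℂ)
      = (((∫ w in Set.Ioi (0:ℝ), w^m * (Real.sqrt Real.pi * Real.exp (-(a+w)^2)) : ℝ)) : ℂ) :=
    integral_ofReal
  rw [hofr]
  -- Step 4: real computation
  have hreal : (2:ℝ)^(m+1)/(m.factorial:ℝ)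
        * (∫ w in Set.Ioi (0:ℝ), w^m * (Real.sqrt Real.pi * Real.exp (-(a+w)^2))) / Real.pi
      = (2:ℝ)^(m+1) / (Real.sqrt Real.pi * t ^ (((m+1:ℕ):ℝ) / 2)) *
          ∫ y : ℝ, Hpow (m+1) (y - x) * Real.exp (-y^2/t) := by
    rw [real_side m t x a ht ha]
    have hR : (∫ w in Set.Ioi (0:ℝ), w^m * (Real.sqrt Real.pi * Real.exp (-(a+w)^2)))
        = Real.sqrt Real.pi * ∫ w in Set.Ioi (0:ℝ), w^m * Real.exp (-(a+w)^2) := by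
      rw [← MeasureTheory.integral_const_mul]
      congr 1
      funext w
      ring
    have hK : (∫ w in Set.Ioi (0:ℝ), w^m/(m.factorial:ℝ) * Real.exp (-(a+w)^2))
        = (∫ w in Set.Ioi (0:ℝ), w^m * Real.exp (-(a+w)^2)) / (m.factorial:ℝ) := by
      rw [← MeasureTheory.integral_div]
      congr 1
      funext w
      ring
    rw [hR, hK]
    have hrt : Real.sqrt t ^ (m+1) = t ^ (((m+1:ℕ):ℝ) / 2) := by
      rw [Real.sqrt_eq_rpow, ← Real.rpow_natCast (t ^ ((1:ℝ)/2)) (m+1),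
        ← Real.rpow_mul ht.le]
      congr 1
      push_cast
      ring
    rw [← hrt]
    have h1 : Real.sqrt Real.pi / Real.pi = 1 / Real.sqrt Real.pi := by
      rw [div_eq_div_iff Real.pi_ne_zero hπ, one_mul]
      exact Real.mul_self_sqrt Real.pi_pos.le
    have hstp : Real.sqrt t ^ (m+1) ≠ 0 := pow_ne_zero _ hst.ne'
    set K := ∫ w in Set.Ioi (0:ℝ), w^m * Real.exp (-(a+w)^2)
    calc (2:ℝ)^(m+1)/(m.factorial:ℝ) * (Real.sqrt Real.pi * K) / Real.pi
        = (2:ℝ)^(m+1)/(m.factorial:ℝ) * K * (Real.sqrt Real.pi / Real.pi) := by ring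
      _ = (2:ℝ)^(m+1)/(m.factorial:ℝ) * K * (1 / Real.sqrt Real.pi) := by rw [h1]
      _ = (2:ℝ)^(m+1) / (Real.sqrt Real.pi * Real.sqrt t ^ (m+1)) *
            (Real.sqrt t ^ (m+1) * (K / (m.factorial:ℝ))) := by
          field_simp
  -- Step 5: put things together
  have hIcancel : ∀ z : ℂ, 1/(Complex.I*(Real.pi:ℂ)) * (Complex.I*z) = z/(Real.pi:ℂ) :=
    fun z => by
      rw [one_div, mul_comm, ← div_eq_mul_inv, mul_div_mul_left _ _ Complex.I_ne_zero]
  rw [← hreal, hIcancel]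
  push_cast
  ring
end
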